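/- The Rogers simplex R(1, 2/√3, √2) has density exactly δ_oct: vol(R ∩ B(0,1)) = δ_oct·vol(R), where R = R(1, 2/√3, √2). -/

import Mathlib

open MeasureTheory Real Set

noncomputable section

abbrev E3 : Type := EuclideanSpace ℝ (Fin 3)

/-- The density of the regular octahedron. -/
def δoct : ℝ := (-3 * π + 12 * arccos (1 / Real.sqrt 3)) / Real.sqrt 8

def pt3 (a b c : ℝ) : E3 := (WithLp.equiv 2 (Fin 3 → ℝ)).symm ![a, b, c]

/-- The Rogers simplex `R(a,b,c)`, with vertices `(0,0,0)`, `(a,0,0)`,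
`(a, √(b²-a²), 0)`, `(a, √(b²-a²), √(c²-b²))`. -/
def RogersSimplex (a b c : ℝ) : Set E3 :=
  convexHull ℝ ({pt3 0 0 0, pt3 a 0 0, pt3 a (Real.sqrt (b ^ 2 - a ^ 2)) 0,
    pt3 a (Real.sqrt (b ^ 2 - a ^ 2)) (Real.sqrt (c ^ 2 - b ^ 2))} : Set E3)

def SRo : Set E3 := {p | Real.sqrt 3 * p 1 ≤ p 0 ∧ p 0 ≤ 1 ∧ 0 ≤ p 2 ∧ p 2 ≤ Real.sqrt 2 * p 1}

lemma rogers_eq : RogersSimplex 1 (2 / Real.sqrt 3) (Real.sqrt 2) = SRo := by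
  have h3 : (Real.sqrt 3 : ℝ) ^ 2 = 3 := Real.sq_sqrt (by norm_num)
  have h2 : (Real.sqrt 2 : ℝ) ^ 2 = 2 := Real.sq_sqrt (by norm_num)
  have s3pos : (0:ℝ) < Real.sqrt 3 := Real.sqrt_pos.2 (by norm_num)
  have s2pos : (0:ℝ) < Real.sqrt 2 := Real.sqrt_pos.2 (by norm_num)
  have hb : (2 / Real.sqrt 3) ^ 2 - (1:ℝ) ^ 2 = 1/3 := by
    rw [div_pow, h3]; norm_num
  have hc : (Real.sqrt 2) ^ 2 - (2 / Real.sqrt 3) ^ 2 = 2/3 := by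
    rw [div_pow, h3, h2]; norm_num
  have hy : Real.sqrt (1/3 : ℝ) = (Real.sqrt 3)⁻¹ := by
    rw [one_div, Real.sqrt_inv]
  have hz : Real.sqrt (2/3 : ℝ) = Real.sqrt 2 / Real.sqrt 3 := by
    rw [Real.sqrt_div (by norm_num : (0:ℝ) ≤ 2)]
  have hinv : Real.sqrt 3 * (Real.sqrt 3)⁻¹ = 1 := mul_inv_cancel₀ s3pos.ne'
  unfold RogersSimplex
  rw [hb, hc, hy, hz]
  apply le_antisymm
  · apply convexHull_min
    · rintro q (rfl | rfl | rfl | rfl)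
      · refine ⟨?_, ?_, ?_, ?_⟩
        · show Real.sqrt 3 * 0 ≤ 0; simp
        · show (0:ℝ) ≤ 1; norm_num
        · show (0:ℝ) ≤ 0; exact le_refl 0
        · show (0:ℝ) ≤ Real.sqrt 2 * 0; simp
      · refine ⟨?_, ?_, ?_, ?_⟩
        · show Real.sqrt 3 * 0 ≤ 1; simp [Real.sqrt_nonneg]
        · show (1:ℝ) ≤ 1; exact le_refl 1
        · show (0:ℝ) ≤ 0; exact le_refl 0
        · show (0:ℝ) ≤ Real.sqrt 2 * 0; simp
      · refine ⟨?_, ?_, ?_, ?_⟩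
        · show Real.sqrt 3 * (Real.sqrt 3)⁻¹ ≤ 1; rw [hinv]
        · show (1:ℝ) ≤ 1; exact le_refl 1
        · show (0:ℝ) ≤ 0; exact le_refl 0
        · show (0:ℝ) ≤ Real.sqrt 2 * (Real.sqrt 3)⁻¹; positivity
      · refine ⟨?_, ?_, ?_, ?_⟩
        · show Real.sqrt 3 * (Real.sqrt 3)⁻¹ ≤ 1; rw [hinv]
        · show (1:ℝ) ≤ 1; exact le_refl 1
        · show (0:ℝ) ≤ Real.sqrt 2 / Real.sqrt 3; positivity
        · show Real.sqrt 2 / Real.sqrt 3 ≤ Real.sqrt 2 * (Real.sqrt 3)⁻¹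
          rw [div_eq_mul_inv]
    · rintro p ⟨hp1, hp2, hp3, hp4⟩ q ⟨hq1, hq2, hq3, hq4⟩ s t hs ht hst
      refine ⟨?_, ?_, ?_, ?_⟩ <;>
        simp only [PiLp.add_apply, PiLp.smul_apply, smul_eq_mul]
      · nlinarith [mul_le_mul_of_nonneg_left hp1 hs, mul_le_mul_of_nonneg_left hq1 ht]
      · nlinarith
      · nlinarith
      · nlinarith [mul_le_mul_of_nonneg_left hp4 hs, mul_le_mul_of_nonneg_left hq4 ht]
  · rintro p ⟨h1, h2', h3', h4⟩
    set x := p 0 with hx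
    set y := p 1 with hyy
    set z := p 2 with hzz
    have hy0 : 0 ≤ y := by nlinarith
    have hsum : ∑ i : Fin 4, (![1 - x, x - Real.sqrt 3 * y,
        Real.sqrt 3 * y - Real.sqrt 3 / Real.sqrt 2 * z, Real.sqrt 3 / Real.sqrt 2 * z]) i = 1 := by
      rw [Fin.sum_univ_four]
      show (1 - x) + (x - Real.sqrt 3 * y) + (Real.sqrt 3 * y - Real.sqrt 3 / Real.sqrt 2 * z)
        + Real.sqrt 3 / Real.sqrt 2 * z = 1
      ring
    have hcm : (Finset.univ : Finset (Fin 4)).centerMass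
        ![1 - x, x - Real.sqrt 3 * y, Real.sqrt 3 * y - Real.sqrt 3 / Real.sqrt 2 * z,
          Real.sqrt 3 / Real.sqrt 2 * z]
        ![pt3 0 0 0, pt3 1 0 0, pt3 1 (Real.sqrt 3)⁻¹ 0,
          pt3 1 (Real.sqrt 3)⁻¹ (Real.sqrt 2 / Real.sqrt 3)] = p := by
      rw [Finset.centerMass_eq_of_sum_1 _ _ hsum, Fin.sum_univ_four]
      ext i
      fin_cases i
      · show (1 - x) * 0 + (x - Real.sqrt 3 * y) * 1
          + (Real.sqrt 3 * y - Real.sqrt 3 / Real.sqrt 2 * z) * 1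
          + Real.sqrt 3 / Real.sqrt 2 * z * 1 = x
        ring
      · show (1 - x) * 0 + (x - Real.sqrt 3 * y) * 0
          + (Real.sqrt 3 * y - Real.sqrt 3 / Real.sqrt 2 * z) * (Real.sqrt 3)⁻¹
          + Real.sqrt 3 / Real.sqrt 2 * z * (Real.sqrt 3)⁻¹ = y
        field_simp
        ring
      · show (1 - x) * 0 + (x - Real.sqrt 3 * y) * 0
          + (Real.sqrt 3 * y - Real.sqrt 3 / Real.sqrt 2 * z) * 0
          + Real.sqrt 3 / Real.sqrt 2 * z * (Real.sqrt 2 / Real.sqrt 3) = z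
        field_simp
        ring
    rw [← hcm]
    refine Finset.centerMass_mem_convexHull _ ?_ (by rw [hsum]; norm_num) ?_
    · intro i _
      fin_cases i
      · show (0:ℝ) ≤ 1 - x; linarith
      · show (0:ℝ) ≤ x - Real.sqrt 3 * y; linarith
      · show (0:ℝ) ≤ Real.sqrt 3 * y - Real.sqrt 3 / Real.sqrt 2 * z
        rw [sub_nonneg, div_mul_eq_mul_div, div_le_iff₀ s2pos]
        nlinarith
      · show (0:ℝ) ≤ Real.sqrt 3 / Real.sqrt 2 * z; positivity
    · intro i _
      fin_cases i
      · exact Set.mem_insert _ _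
      · exact Set.mem_insert_of_mem _ (Set.mem_insert _ _)
      · exact Set.mem_insert_of_mem _ (Set.mem_insert_of_mem _ (Set.mem_insert _ _))
      · exact Set.mem_insert_of_mem _ (Set.mem_insert_of_mem _ (Set.mem_insert_of_mem _ rfl))

def SR : Set (ℝ × ℝ × ℝ) :=
  {q | Real.sqrt 3 * q.2.1 ≤ q.1 ∧ q.1 ≤ 1 ∧ 0 ≤ q.2.2 ∧ q.2.2 ≤ Real.sqrt 2 * q.2.1}

lemma measurableSet_SR : MeasurableSet SR := by
  unfold SR
  simp only [Set.setOf_and]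
  refine MeasurableSet.inter ?_ (MeasurableSet.inter ?_ (MeasurableSet.inter ?_ ?_)) <;>
    exact measurableSet_le (by fun_prop) (by fun_prop)

lemma region_meas : MeasurableSet {q : ℝ × ℝ | 0 ≤ q.2 ∧ q.2 ≤ Real.sqrt 2 * q.1} := by
  simp only [Set.setOf_and]
  exact MeasurableSet.inter (measurableSet_le (by fun_prop) (by fun_prop))
    (measurableSet_le (by fun_prop) (by fun_prop))

lemma vol_SR : volume SR = ENNReal.ofReal (Real.sqrt 2 / 18) := by
  have h3 : (Real.sqrt 3 : ℝ) ^ 2 = 3 := Real.sq_sqrt (by norm_num)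
  have s3pos : (0:ℝ) < Real.sqrt 3 := Real.sqrt_pos.2 (by norm_num)
  rw [Measure.volume_eq_prod, Measure.prod_apply_symm measurableSet_SR]
  have h1 : ∀ q : ℝ × ℝ, volume ((fun x => (x, q)) ⁻¹' SR) =
      Set.indicator {q : ℝ × ℝ | 0 ≤ q.2 ∧ q.2 ≤ Real.sqrt 2 * q.1}
        (fun q => ENNReal.ofReal (1 - Real.sqrt 3 * q.1)) q := by
    intro q
    by_cases hq : 0 ≤ q.2 ∧ q.2 ≤ Real.sqrt 2 * q.1
    · rw [Set.indicator_of_mem (show q ∈ {q : ℝ × ℝ | 0 ≤ q.2 ∧ q.2 ≤ Real.sqrt 2 * q.1} from hq)]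
      have : ((fun x => (x, q)) ⁻¹' SR) = Icc (Real.sqrt 3 * q.1) 1 := by
        ext x
        simp only [SR, mem_preimage, mem_setOf_eq, mem_Icc, hq.1, hq.2, and_true, true_and]
      rw [this, Real.volume_Icc]
    · rw [Set.indicator_of_notMem (show q ∉ {q : ℝ × ℝ | 0 ≤ q.2 ∧ q.2 ≤ Real.sqrt 2 * q.1} from hq)]
      have : ((fun x => (x, q)) ⁻¹' SR) = ∅ := by
        ext x
        simp only [SR, mem_preimage, mem_setOf_eq, mem_empty_iff_false, iff_false]
        intro h
        exact hq ⟨h.2.2.1, h.2.2.2⟩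
      simp [this]
  simp_rw [h1]
  rw [Measure.volume_eq_prod, MeasureTheory.lintegral_prod _
    ((Measurable.indicator (by fun_prop) region_meas).aemeasurable)]
  have h2 : ∀ y : ℝ, (∫⁻ z, Set.indicator {q : ℝ × ℝ | 0 ≤ q.2 ∧ q.2 ≤ Real.sqrt 2 * q.1}
      (fun q => ENNReal.ofReal (1 - Real.sqrt 3 * q.1)) (y, z)) =
      ENNReal.ofReal (1 - Real.sqrt 3 * y) * ENNReal.ofReal (Real.sqrt 2 * y) := by
    intro y
    have : (fun z => Set.indicator {q : ℝ × ℝ | 0 ≤ q.2 ∧ q.2 ≤ Real.sqrt 2 * q.1}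
        (fun q => ENNReal.ofReal (1 - Real.sqrt 3 * q.1)) (y, z)) =
        Set.indicator (Icc 0 (Real.sqrt 2 * y)) (fun _ => ENNReal.ofReal (1 - Real.sqrt 3 * y)) := by
      funext z
      by_cases hz : z ∈ Icc 0 (Real.sqrt 2 * y)
      · rw [Set.indicator_of_mem hz, Set.indicator_of_mem]
        exact ⟨hz.1, hz.2⟩
      · rw [Set.indicator_of_notMem hz, Set.indicator_of_notMem]
        exact fun h => hz ⟨h.1, h.2⟩
    rw [this, lintegral_indicator measurableSet_Icc _, setLIntegral_const, Real.volume_Icc,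
      sub_zero]
  simp_rw [h2]
  have h4 : (fun y => ENNReal.ofReal (1 - Real.sqrt 3 * y) * ENNReal.ofReal (Real.sqrt 2 * y)) =
      Set.indicator (Icc 0 (Real.sqrt 3)⁻¹)
        (fun y => ENNReal.ofReal (Real.sqrt 2 * y * (1 - Real.sqrt 3 * y))) := by
    funext y
    by_cases hy : y ∈ Icc 0 (Real.sqrt 3)⁻¹
    · rw [Set.indicator_of_mem hy, ← ENNReal.ofReal_mul, mul_comm]
      have : Real.sqrt 3 * y ≤ 1 := by
        calc Real.sqrt 3 * y ≤ Real.sqrt 3 * (Real.sqrt 3)⁻¹ :=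
          mul_le_mul_of_nonneg_left hy.2 s3pos.le
        _ = 1 := mul_inv_cancel₀ s3pos.ne'
      linarith
    · rw [Set.indicator_of_notMem hy]
      rcases not_and_or.1 hy with h | h
      · push_neg at h
        rw [ENNReal.ofReal_eq_zero.2 (by nlinarith [Real.sqrt_nonneg 2] : Real.sqrt 2 * y ≤ 0),
          mul_zero]
      · push_neg at h
        rw [ENNReal.ofReal_eq_zero.2 (by
          have : 1 < Real.sqrt 3 * y := by
            rw [← mul_inv_cancel₀ s3pos.ne']
            exact mul_lt_mul_of_pos_left h s3pos
          linarith : 1 - Real.sqrt 3 * y ≤ 0), zero_mul]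
  rw [h4, lintegral_indicator measurableSet_Icc _]
  rw [← MeasureTheory.ofReal_integral_eq_lintegral_ofReal]
  · rw [MeasureTheory.integral_Icc_eq_integral_Ioc,
      ← intervalIntegral.integral_of_le (by positivity : (0:ℝ) ≤ (Real.sqrt 3)⁻¹)]
    have : ∀ y : ℝ, Real.sqrt 2 * y * (1 - Real.sqrt 3 * y) =
        Real.sqrt 2 * y - Real.sqrt 2 * Real.sqrt 3 * y ^ 2 := by intro y; ring
    simp_rw [this]
    rw [intervalIntegral.integral_sub
      (Continuous.intervalIntegrable (by fun_prop : Continuous fun x : ℝ => Real.sqrt 2 * x) _ _)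
      (Continuous.intervalIntegrable (by fun_prop : Continuous fun x : ℝ => Real.sqrt 2 * Real.sqrt 3 * x ^ 2) _ _),
      intervalIntegral.integral_const_mul, intervalIntegral.integral_const_mul,
      integral_id, integral_pow]
    congr 1
    have e1 : ((Real.sqrt 3)⁻¹) ^ 2 = 3⁻¹ := by rw [inv_pow, h3]
    have e2 : ((Real.sqrt 3)⁻¹) ^ 3 = (Real.sqrt 3)⁻¹ * 3⁻¹ := by
      rw [pow_succ' _ 2]  -- x^3 = x * x^2 ?
      rw [e1]
    rw [e2, e1]
    field_simp
    ring
  · exact (Continuous.integrableOn_Icc (by fun_prop))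
  · refine (ae_restrict_iff' measurableSet_Icc).2 (ae_of_all _ fun y hy => ?_)
    have h1 : Real.sqrt 3 * y ≤ 1 := by
      calc Real.sqrt 3 * y ≤ Real.sqrt 3 * (Real.sqrt 3)⁻¹ :=
        mul_le_mul_of_nonneg_left hy.2 s3pos.le
      _ = 1 := mul_inv_cancel₀ s3pos.ne'
    have := hy.1
    simp only [Pi.zero_apply]
    have h5 : 0 ≤ 1 - Real.sqrt 3 * y := by linarith
    exact mul_nonneg (mul_nonneg (Real.sqrt_nonneg 2) this) h5

def SB : Set (ℝ × ℝ × ℝ) :=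
  {q | Real.sqrt 3 * q.2.1 ≤ q.1 ∧ 0 ≤ q.2.2 ∧ q.2.2 ≤ Real.sqrt 2 * q.2.1 ∧
    q.1 ^ 2 + q.2.1 ^ 2 + q.2.2 ^ 2 ≤ 1}

lemma measurableSet_SB : MeasurableSet SB := by
  unfold SB
  simp only [Set.setOf_and]
  refine MeasurableSet.inter ?_ (MeasurableSet.inter ?_ (MeasurableSet.inter ?_ ?_)) <;>
    exact measurableSet_le (by fun_prop) (by fun_prop)

def Fb : ℝ × ℝ → ℝ := fun q =>
  Set.indicator {q : ℝ × ℝ | 0 ≤ q.2 ∧ q.2 ≤ Real.sqrt 2 * q.1}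
    (fun q => max 0 (Real.sqrt (1 - q.1 ^ 2 - q.2 ^ 2) - Real.sqrt 3 * q.1)) q

lemma Fb_cont_inner : Continuous (fun q : ℝ × ℝ =>
    max 0 (Real.sqrt (1 - q.1 ^ 2 - q.2 ^ 2) - Real.sqrt 3 * q.1)) := by
  apply Continuous.max continuous_const
  exact (Real.continuous_sqrt.comp (by fun_prop)).sub (by fun_prop)

lemma Fb_meas : Measurable Fb := Fb_cont_inner.measurable.indicator region_meas

lemma Fb_nonneg : ∀ q, 0 ≤ Fb q := fun q =>
  Set.indicator_nonneg (fun q _ => le_max_left _ _) q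

lemma ofReal_max0 (a : ℝ) : ENNReal.ofReal (max 0 a) = ENNReal.ofReal a := by
  rcases le_total a 0 with h | h
  · rw [max_eq_left h, ENNReal.ofReal_eq_zero.2 h]; simp
  · rw [max_eq_right h]

lemma vol_SB_eq : volume SB = ENNReal.ofReal (∫ q : ℝ × ℝ, Fb q) := by
  have s3nn : (0:ℝ) ≤ Real.sqrt 3 := Real.sqrt_nonneg 3
  rw [Measure.volume_eq_prod, Measure.prod_apply_symm measurableSet_SB]
  have h1 : ∀ q : ℝ × ℝ, volume ((fun x => (x, q)) ⁻¹' SB) = ENNReal.ofReal (Fb q) := by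
    intro q
    by_cases hq : 0 ≤ q.2 ∧ q.2 ≤ Real.sqrt 2 * q.1
    · have hy0 : 0 ≤ q.1 := by
        nlinarith [hq.1, hq.2, Real.sqrt_pos.2 (show (0:ℝ) < 2 by norm_num)]
      have hFb : Fb q = max 0 (Real.sqrt (1 - q.1 ^ 2 - q.2 ^ 2) - Real.sqrt 3 * q.1) :=
        Set.indicator_of_mem (show q ∈ {q : ℝ × ℝ | 0 ≤ q.2 ∧ q.2 ≤ Real.sqrt 2 * q.1} from hq) _
      rw [hFb, ofReal_max0]
      by_cases hr : 0 ≤ 1 - q.1 ^ 2 - q.2 ^ 2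
      · have : ((fun x => (x, q)) ⁻¹' SB) = Icc (Real.sqrt 3 * q.1)
            (Real.sqrt (1 - q.1 ^ 2 - q.2 ^ 2)) := by
          ext x
          simp only [SB, mem_preimage, mem_setOf_eq, mem_Icc, hq.1, hq.2, true_and, and_true]
          constructor
          · rintro ⟨h1, h2⟩
            refine ⟨h1, ?_⟩
            rw [Real.le_sqrt (le_trans (by positivity) h1) hr]
            linarith
          · rintro ⟨h1, h2⟩
            refine ⟨h1, ?_⟩
            have hx0 : 0 ≤ x := le_trans (by positivity) h1
            have := Real.sq_sqrt hr
            nlinarith [Real.sqrt_nonneg (1 - q.1 ^ 2 - q.2 ^ 2)]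
        rw [this, Real.volume_Icc]
      · push_neg at hr
        -- then q.1 > 0 (since q.1 = 0 → q.2 = 0 → contradiction)
        have hy : 0 < q.1 := by
          rcases eq_or_lt_of_le hy0 with h | h
          · exfalso
            have h2 : q.2 ≤ 0 := by rw [← h] at hq; simpa using hq.2
            have : q.2 = 0 := le_antisymm h2 hq.1
            rw [← h, this] at hr
            norm_num at hr
          · exact h
        have hempty : ((fun x => (x, q)) ⁻¹' SB) = ∅ := by
          ext x
          simp only [SB, mem_preimage, mem_setOf_eq, mem_empty_iff_false, iff_false]
          rintro ⟨h1, _, _, h4⟩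
          nlinarith
        rw [hempty]
        simp only [measure_empty]
        symm
        rw [ENNReal.ofReal_eq_zero, Real.sqrt_eq_zero'.2 hr.le]
        nlinarith
    · have hFb : Fb q = 0 :=
        Set.indicator_of_notMem
          (show q ∉ {q : ℝ × ℝ | 0 ≤ q.2 ∧ q.2 ≤ Real.sqrt 2 * q.1} from hq) _
      have hempty : ((fun x => (x, q)) ⁻¹' SB) = ∅ := by
        ext x
        simp only [SB, mem_preimage, mem_setOf_eq, mem_empty_iff_false, iff_false]
        rintro ⟨_, h2, h3, _⟩
        exact hq ⟨h2, h3⟩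
      rw [hempty, hFb]
      simp
  simp_rw [h1]
  rw [← MeasureTheory.ofReal_integral_eq_lintegral_ofReal ?hint (ae_of_all _ Fb_nonneg)]
  case hint =>
    -- Integrable Fb
    have hbound : ∀ q : ℝ × ℝ, ‖Fb q‖ ≤
        Set.indicator (Icc (-1:ℝ) 1 ×ˢ Icc (-1:ℝ) 1) (fun _ => (1:ℝ)) q := by
      intro q
      rw [Real.norm_eq_abs, abs_of_nonneg (Fb_nonneg q)]
      by_cases hq : 0 ≤ q.2 ∧ q.2 ≤ Real.sqrt 2 * q.1
      · have hFb : Fb q = max 0 (Real.sqrt (1 - q.1 ^ 2 - q.2 ^ 2) - Real.sqrt 3 * q.1) :=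
          Set.indicator_of_mem (show q ∈ {q : ℝ × ℝ | 0 ≤ q.2 ∧ q.2 ≤ Real.sqrt 2 * q.1} from hq) _
        have hy0 : 0 ≤ q.1 := by
          nlinarith [hq.1, hq.2, Real.sqrt_pos.2 (show (0:ℝ) < 2 by norm_num)]
        by_cases hsq : q ∈ Icc (-1:ℝ) 1 ×ˢ Icc (-1:ℝ) 1
        · rw [Set.indicator_of_mem hsq, hFb]
          rw [max_le_iff]
          refine ⟨by norm_num, ?_⟩
          have h1 : Real.sqrt (1 - q.1 ^ 2 - q.2 ^ 2) ≤ 1 := by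
            have := Real.sqrt_le_sqrt (show 1 - q.1 ^ 2 - q.2 ^ 2 ≤ 1 by
              nlinarith [sq_nonneg q.1, sq_nonneg q.2])
            rwa [Real.sqrt_one] at this
          nlinarith [Real.sqrt_nonneg (3:ℝ)]
        · rw [Set.indicator_of_notMem hsq, hFb]
          -- outside the square, the max is 0
          have : 1 - q.1 ^ 2 - q.2 ^ 2 ≤ 0 := by
            simp only [Set.mem_prod, mem_Icc, not_and_or, not_le] at hsq
            rcases hsq with (h | h) | (h | h)
            · nlinarith [sq_nonneg q.2]
            · nlinarith [sq_nonneg q.2]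
            · nlinarith [hq.1, sq_nonneg q.1]
            · nlinarith [sq_nonneg q.1]
          rw [Real.sqrt_eq_zero'.2 this, max_le_iff]
          exact ⟨le_refl 0, by nlinarith [Real.sqrt_nonneg (3:ℝ)]⟩
      · have hFb : Fb q = 0 :=
          Set.indicator_of_notMem
            (show q ∉ {q : ℝ × ℝ | 0 ≤ q.2 ∧ q.2 ≤ Real.sqrt 2 * q.1} from hq) _
        rw [hFb]
        exact Set.indicator_nonneg (fun _ _ => by norm_num) q
    refine Integrable.mono' ?_ Fb_meas.aestronglyMeasurable (ae_of_all _ hbound)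
    rw [integrable_indicator_iff (measurableSet_Icc.prod measurableSet_Icc)]
    refine (integrableOn_const_iff (C := (1:ℝ))).2 (Or.inr ?_)
    rw [Measure.volume_eq_prod, Measure.prod_prod, Real.volume_Icc]
    exact ENNReal.mul_lt_top ENNReal.ofReal_lt_top ENNReal.ofReal_lt_top

def tstar : ℝ := Real.arctan (Real.sqrt 2)

lemma Fb_support {q : ℝ × ℝ} (h : Fb q ≠ 0) : q.1 ^ 2 + q.2 ^ 2 < 1 ∧ 0 ≤ q.1 := by
  by_cases hq : 0 ≤ q.2 ∧ q.2 ≤ Real.sqrt 2 * q.1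
  · have hy0 : 0 ≤ q.1 := by
      nlinarith [hq.1, hq.2, Real.sqrt_pos.2 (show (0:ℝ) < 2 by norm_num)]
    have hFb : Fb q = max 0 (Real.sqrt (1 - q.1 ^ 2 - q.2 ^ 2) - Real.sqrt 3 * q.1) :=
      Set.indicator_of_mem (show q ∈ {q : ℝ × ℝ | 0 ≤ q.2 ∧ q.2 ≤ Real.sqrt 2 * q.1} from hq) _
    rw [hFb] at h
    have hpos : 0 < Real.sqrt (1 - q.1 ^ 2 - q.2 ^ 2) - Real.sqrt 3 * q.1 := by
      rcases le_or_gt (Real.sqrt (1 - q.1 ^ 2 - q.2 ^ 2) - Real.sqrt 3 * q.1) 0 with hle | hlt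
      · exact absurd (max_eq_left hle) h
      · exact hlt
    have : 0 < Real.sqrt (1 - q.1 ^ 2 - q.2 ^ 2) := by
      nlinarith [Real.sqrt_nonneg (3:ℝ), mul_nonneg (Real.sqrt_nonneg (3:ℝ)) hy0]
    have := Real.sqrt_pos.1 this
    exact ⟨by linarith, hy0⟩
  · exact absurd (Set.indicator_of_notMem
      (show q ∉ {q : ℝ × ℝ | 0 ≤ q.2 ∧ q.2 ≤ Real.sqrt 2 * q.1} from hq) _) h

lemma Fb_le_one (q : ℝ × ℝ) : Fb q ≤ 1 := by
  by_cases hq : 0 ≤ q.2 ∧ q.2 ≤ Real.sqrt 2 * q.1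
  · have hy0 : 0 ≤ q.1 := by
      nlinarith [hq.1, hq.2, Real.sqrt_pos.2 (show (0:ℝ) < 2 by norm_num)]
    have hFb : Fb q = max 0 (Real.sqrt (1 - q.1 ^ 2 - q.2 ^ 2) - Real.sqrt 3 * q.1) :=
      Set.indicator_of_mem (show q ∈ {q : ℝ × ℝ | 0 ≤ q.2 ∧ q.2 ≤ Real.sqrt 2 * q.1} from hq) _
    rw [hFb, max_le_iff]
    refine ⟨by norm_num, ?_⟩
    have h1 : Real.sqrt (1 - q.1 ^ 2 - q.2 ^ 2) ≤ 1 := by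
      have := Real.sqrt_le_sqrt (show 1 - q.1 ^ 2 - q.2 ^ 2 ≤ 1 by
        nlinarith [sq_nonneg q.1, sq_nonneg q.2])
      rwa [Real.sqrt_one] at this
    nlinarith [mul_nonneg (Real.sqrt_nonneg (3:ℝ)) hy0]
  · rw [Fb, Set.indicator_of_notMem
      (show q ∉ {q : ℝ × ℝ | 0 ≤ q.2 ∧ q.2 ≤ Real.sqrt 2 * q.1} from hq)]
    norm_num

lemma inner_eval {θ : ℝ} (hθ : θ ∈ Icc 0 tstar) :
    ∫ ρ in Ioi (0:ℝ), ρ * Fb (ρ * Real.cos θ, ρ * Real.sin θ) =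
      (1 - Real.sqrt 3 * Real.cos θ / Real.sqrt (1 + 3 * Real.cos θ ^ 2)) / 3 := by
  have h3 : (Real.sqrt 3 : ℝ) ^ 2 = 3 := Real.sq_sqrt (by norm_num)
  have s3pos : (0:ℝ) < Real.sqrt 3 := Real.sqrt_pos.2 (by norm_num)
  set c := Real.cos θ with hcdef
  set s := Real.sin θ with hsdef
  have hsc : s ^ 2 + c ^ 2 = 1 := Real.sin_sq_add_cos_sq θ
  have hθπ : θ < π / 2 := lt_of_le_of_lt hθ.2 (Real.arctan_lt_pi_div_two _)
  have hc : 0 < c := Real.cos_pos_of_mem_Ioo ⟨by linarith [Real.pi_pos, hθ.1], hθπ⟩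
  have hs0 : 0 ≤ s := Real.sin_nonneg_of_nonneg_of_le_pi hθ.1 (by linarith [Real.pi_pos])
  have hsc2 : s ≤ Real.sqrt 2 * c := by
    have htan : Real.tan θ ≤ Real.sqrt 2 := by
      have := Real.strictMonoOn_tan.monotoneOn
        (show θ ∈ Ioo (-(π/2)) (π/2) from ⟨by linarith [Real.pi_pos, hθ.1], hθπ⟩)
        (show tstar ∈ Ioo (-(π/2)) (π/2) from
          ⟨by
            have : (0:ℝ) < tstar := by
              rw [tstar, ← Real.arctan_zero]
              exact Real.arctan_strictMono (Real.sqrt_pos.2 (by norm_num : (0:ℝ) < 2))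
            linarith [Real.pi_pos],
           Real.arctan_lt_pi_div_two _⟩) hθ.2
      rwa [show Real.tan tstar = Real.sqrt 2 from Real.tan_arctan _] at this
    have : s = Real.tan θ * c := by
      rw [Real.tan_eq_sin_div_cos]
      field_simp
      rw [← hcdef, mul_div_assoc, div_self hc.ne', mul_one]
    rw [this]
    exact mul_le_mul_of_nonneg_right htan hc.le
  set u := Real.sqrt (1 + 3 * c ^ 2) with hudef
  have hu2 : u ^ 2 = 1 + 3 * c ^ 2 := Real.sq_sqrt (by positivity)
  have hupos : 0 < u := Real.sqrt_pos.2 (by positivity)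
  have hu1 : 1 < u := by nlinarith
  set R := u⁻¹ with hRdef
  have hR0 : 0 < R := by positivity
  have hR1 : R < 1 := by
    rw [hRdef, inv_lt_one_iff₀]
    right; exact hu1
  have step1 : ∀ ρ ∈ Ioi (0:ℝ), ρ * Fb (ρ * c, ρ * s) =
      Set.indicator (Ioc 0 R) (fun ρ => ρ * (Real.sqrt (1 - ρ ^ 2) - Real.sqrt 3 * c * ρ)) ρ := by
    intro ρ hρ
    rw [mem_Ioi] at hρ
    have hmem : (ρ * c, ρ * s) ∈ {q : ℝ × ℝ | 0 ≤ q.2 ∧ q.2 ≤ Real.sqrt 2 * q.1} := by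
      refine ⟨mul_nonneg hρ.le hs0, ?_⟩
      calc ρ * s ≤ ρ * (Real.sqrt 2 * c) := mul_le_mul_of_nonneg_left hsc2 hρ.le
      _ = Real.sqrt 2 * (ρ * c) := by ring
    have harg : 1 - (ρ * c) ^ 2 - (ρ * s) ^ 2 = 1 - ρ ^ 2 := by
      linear_combination (-(ρ ^ 2)) * hsc
    have hFb : Fb (ρ * c, ρ * s) =
        max 0 (Real.sqrt (1 - ρ ^ 2) - Real.sqrt 3 * (ρ * c)) := by
      rw [Fb, Set.indicator_of_mem hmem]
      dsimp only
      rw [harg]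
    by_cases hρR : ρ ≤ R
    · rw [Set.indicator_of_mem (show ρ ∈ Ioc 0 R from ⟨hρ, hρR⟩), hFb]
      have hρu : ρ * u ≤ 1 := by
        calc ρ * u ≤ R * u := mul_le_mul_of_nonneg_right hρR hupos.le
        _ = 1 := inv_mul_cancel₀ hupos.ne'
      have h1ρ : 0 ≤ 1 - ρ ^ 2 := by nlinarith
      have hle : Real.sqrt 3 * (ρ * c) ≤ Real.sqrt (1 - ρ ^ 2) := by
        rw [Real.le_sqrt (by positivity) h1ρ]
        have : (Real.sqrt 3 * (ρ * c)) ^ 2 = 3 * c ^ 2 * ρ ^ 2 := by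
          rw [mul_pow, h3]; ring
        rw [this]
        have h1 : (ρ * u) ^ 2 ≤ 1 := pow_le_one₀ (mul_nonneg hρ.le hupos.le) hρu
        have h2 : ρ ^ 2 * (1 + 3 * c ^ 2) ≤ 1 := by
          rw [← hu2, ← mul_pow]; exact h1
        nlinarith [h2]
      rw [max_eq_right (by linarith)]
      ring
    · push_neg at hρR
      rw [Set.indicator_of_notMem (fun h => absurd h.2 (not_le.2 hρR)), hFb]
      have hρu : 1 < ρ * u := by
        calc 1 = R * u := (inv_mul_cancel₀ hupos.ne').symm
        _ < ρ * u := mul_lt_mul_of_pos_right hρR hupos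
      have hle : Real.sqrt (1 - ρ ^ 2) ≤ Real.sqrt 3 * (ρ * c) := by
        have h1 : Real.sqrt (1 - ρ ^ 2) ≤ Real.sqrt (3 * c ^ 2 * ρ ^ 2) :=
          Real.sqrt_le_sqrt (by nlinarith)
        have h2 : Real.sqrt (3 * c ^ 2 * ρ ^ 2) = Real.sqrt 3 * (ρ * c) := by
          rw [show 3 * c ^ 2 * ρ ^ 2 = (Real.sqrt 3 * (ρ * c)) ^ 2 by rw [mul_pow, h3]; ring]
          exact Real.sqrt_sq (by positivity)
        linarith [h1, h2.le, h2.ge]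
      rw [max_eq_left (by linarith), mul_zero]
  rw [setIntegral_congr_fun measurableSet_Ioi step1,
    setIntegral_indicator measurableSet_Ioc,
    Set.inter_eq_self_of_subset_right Ioc_subset_Ioi_self,
    ← intervalIntegral.integral_of_le hR0.le]
  have hderiv : ∀ ρ ∈ uIcc (0:ℝ) R, HasDerivAt
      (fun t => -(Real.sqrt (1 - t ^ 2)) ^ 3 / 3 - Real.sqrt 3 * c * t ^ 3 / 3)
      (ρ * (Real.sqrt (1 - ρ ^ 2) - Real.sqrt 3 * c * ρ)) ρ := by
    intro ρ hρ
    rw [Set.uIcc_of_le hR0.le, Set.mem_Icc] at hρ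
    have h1ρ : 0 < 1 - ρ ^ 2 := by nlinarith [hρ.1, hρ.2]
    have hsqpos : 0 < Real.sqrt (1 - ρ ^ 2) := Real.sqrt_pos.2 h1ρ
    have hinner : HasDerivAt (fun t : ℝ => 1 - t ^ 2) (-(2 * ρ)) ρ := by
      simpa using (hasDerivAt_pow 2 ρ).const_sub 1
    have hsqrt : HasDerivAt (fun t : ℝ => Real.sqrt (1 - t ^ 2))
        (1 / (2 * Real.sqrt (1 - ρ ^ 2)) * -(2 * ρ)) ρ :=
      (Real.hasDerivAt_sqrt h1ρ.ne').comp ρ hinner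
    have hcube : HasDerivAt (fun t : ℝ => (Real.sqrt (1 - t ^ 2)) ^ 3)
        (3 * (Real.sqrt (1 - ρ ^ 2)) ^ 2 * (1 / (2 * Real.sqrt (1 - ρ ^ 2)) * -(2 * ρ))) ρ := by
      simpa using hsqrt.fun_pow 3
    have hfull := ((hcube.neg.div_const 3).sub
      (((hasDerivAt_pow 3 ρ).const_mul (Real.sqrt 3 * c)).div_const 3))
    have hs2 : (Real.sqrt (1 - ρ ^ 2)) ^ 2 = 1 - ρ ^ 2 := Real.sq_sqrt h1ρ.le
    convert hfull using 1
    · rfl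
    · rfl
    · rfl
    push_cast
    norm_num
    linear_combination (-(ρ * Real.sqrt (1 - ρ ^ 2))) * (mul_inv_cancel₀ hsqpos.ne')
  rw [intervalIntegral.integral_eq_sub_of_hasDerivAt hderiv
    (Continuous.intervalIntegrable (by
      exact continuous_id.mul ((Real.continuous_sqrt.comp (by fun_prop)).sub (by fun_prop))) _ _)]
  -- now evaluate
  have h1R : 1 - R ^ 2 = 3 * c ^ 2 / u ^ 2 := by
    rw [hRdef, inv_pow]
    field_simp
    linarith [hu2]
  have hsR : Real.sqrt (1 - R ^ 2) = Real.sqrt 3 * c / u := by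
    rw [h1R, show 3 * c ^ 2 / u ^ 2 = (Real.sqrt 3 * c / u) ^ 2 by
      rw [div_pow, mul_pow, h3]]
    exact Real.sqrt_sq (by positivity)
  rw [hsR]
  rw [show (0:ℝ) ^ 2 = 0 by norm_num, sub_zero, Real.sqrt_one]
  rw [hRdef]
  field_simp
  linear_combination (-(Real.sqrt 3 * c ^ 3)) * h3 +
    (Real.sqrt 3 * c) * hu2

lemma inner_zero {θ : ℝ} (hθ1 : θ ∈ Ioo (-π) π) (hθ2 : θ ∉ Icc 0 tstar) :
    (∫ ρ in Ioi (0:ℝ), ρ * Fb (ρ * Real.cos θ, ρ * Real.sin θ)) = 0 := by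
  have hzero : ∀ ρ ∈ Ioi (0:ℝ), ρ * Fb (ρ * Real.cos θ, ρ * Real.sin θ) = 0 := by
    intro ρ hρ
    rw [mem_Ioi] at hρ
    have hnm : (ρ * Real.cos θ, ρ * Real.sin θ) ∉
        {q : ℝ × ℝ | 0 ≤ q.2 ∧ q.2 ≤ Real.sqrt 2 * q.1} := by
      intro hmem
      obtain ⟨hm1, hm2⟩ := hmem
      have hs0 : 0 ≤ Real.sin θ := nonneg_of_mul_nonneg_right hm1 hρ
      have hsc : Real.sin θ ≤ Real.sqrt 2 * Real.cos θ := by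
        have : ρ * Real.sin θ ≤ ρ * (Real.sqrt 2 * Real.cos θ) := by
          calc ρ * Real.sin θ ≤ Real.sqrt 2 * (ρ * Real.cos θ) := hm2
          _ = ρ * (Real.sqrt 2 * Real.cos θ) := by ring
        exact le_of_mul_le_mul_left this hρ
      -- derive θ ∈ Icc 0 tstar
      have hθ0 : 0 ≤ θ := by
        by_contra hneg
        push_neg at hneg
        have : Real.sin θ < 0 := Real.sin_neg_of_neg_of_neg_pi_lt hneg hθ1.1
        linarith
      have hcpos : 0 < Real.cos θ := by
        rcases lt_or_ge 0 (Real.cos θ) with h | h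
        · exact h
        · exfalso
          have hsle : Real.sin θ ≤ 0 := by
            have : Real.sqrt 2 * Real.cos θ ≤ 0 :=
              mul_nonpos_of_nonneg_of_nonpos (Real.sqrt_nonneg 2) h
            linarith
          have hs_eq : Real.sin θ = 0 := le_antisymm hsle hs0
          have hθeq : θ = 0 := by
            rwa [Real.sin_eq_zero_iff_of_lt_of_lt hθ1.1 hθ1.2] at hs_eq
          rw [hθeq, Real.cos_zero] at h
          norm_num at h
      have hθhalf : θ < π / 2 := by
        by_contra hge
        push_neg at hge
        have : Real.cos θ ≤ 0 :=
          Real.cos_nonpos_of_pi_div_two_le_of_le hge (by linarith [hθ1.2, Real.pi_pos])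
        linarith
      have htan : Real.tan θ ≤ Real.sqrt 2 := by
        rw [Real.tan_eq_sin_div_cos, div_le_iff₀ hcpos]
        linarith
      have : θ ≤ tstar := by
        have h1 : θ = Real.arctan (Real.tan θ) :=
          (Real.arctan_tan (by linarith [Real.pi_pos]) hθhalf).symm
        rw [h1, tstar]
        exact Real.arctan_strictMono.monotone htan
      exact hθ2 ⟨hθ0, this⟩
    rw [Fb, Set.indicator_of_notMem hnm, mul_zero]
  rw [setIntegral_congr_fun measurableSet_Ioi hzero]
  simp

lemma sq_lt_one' : Real.sqrt 3 / 2 < 1 := by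
  nlinarith [Real.sq_sqrt (show (0:ℝ) ≤ 3 by norm_num), Real.sqrt_nonneg 3]

lemma tstar_lt : tstar < π / 2 := Real.arctan_lt_pi_div_two _
lemma tstar_pos : 0 < tstar := by
  rw [tstar, ← Real.arctan_zero]
  exact Real.arctan_strictMono (Real.sqrt_pos.2 (by norm_num))

lemma outer_eval :
    (∫ θ in (0:ℝ)..tstar,
      (1 - Real.sqrt 3 * Real.cos θ / Real.sqrt (1 + 3 * Real.cos θ ^ 2)) / 3) =
      (tstar - π / 4) / 3 := by
  have h3 : (Real.sqrt 3 : ℝ) ^ 2 = 3 := Real.sq_sqrt (by norm_num)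
  have h2 : (Real.sqrt 2 : ℝ) ^ 2 = 2 := Real.sq_sqrt (by norm_num)
  have s3pos : (0:ℝ) < Real.sqrt 3 := Real.sqrt_pos.2 (by norm_num)
  have s2pos : (0:ℝ) < Real.sqrt 2 := Real.sqrt_pos.2 (by norm_num)
  have hs4 : Real.sqrt 4 = 2 := by
    rw [show (4:ℝ) = 2 ^ 2 by norm_num, Real.sqrt_sq (by norm_num : (0:ℝ) ≤ 2)]
  have hderiv : ∀ θ ∈ uIcc (0:ℝ) tstar, HasDerivAt
      (fun t => t / 3 - Real.arcsin (Real.sqrt 3 * Real.sin t / 2) / 3)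
      ((1 - Real.sqrt 3 * Real.cos θ / Real.sqrt (1 + 3 * Real.cos θ ^ 2)) / 3) θ := by
    intro θ _
    set c := Real.cos θ with hcdef
    set s := Real.sin θ with hsdef
    have hsc : s ^ 2 + c ^ 2 = 1 := Real.sin_sq_add_cos_sq θ
    have hxabs : |Real.sqrt 3 * s / 2| < 1 := by
      rw [abs_div, abs_mul, abs_of_nonneg (Real.sqrt_nonneg 3), abs_of_nonneg
        (by norm_num : (0:ℝ) ≤ 2)]
      have hb : |s| ≤ 1 := Real.abs_sin_le_one θ
      nlinarith [h3, s3pos, abs_nonneg s]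
    have hx1 : Real.sqrt 3 * s / 2 ≠ 1 := fun h => by rw [h] at hxabs; norm_num at hxabs
    have hxm1 : Real.sqrt 3 * s / 2 ≠ -1 := fun h => by rw [h] at hxabs; norm_num at hxabs
    have hsin : HasDerivAt (fun t : ℝ => Real.sqrt 3 * Real.sin t / 2)
        (Real.sqrt 3 * c / 2) θ := ((Real.hasDerivAt_sin θ).const_mul (Real.sqrt 3)).div_const 2
    have harc : HasDerivAt (fun t : ℝ => Real.arcsin (Real.sqrt 3 * Real.sin t / 2))
        (1 / Real.sqrt (1 - (Real.sqrt 3 * s / 2) ^ 2) * (Real.sqrt 3 * c / 2)) θ :=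
      (Real.hasDerivAt_arcsin hxm1 hx1).comp (h₂ := Real.arcsin) θ hsin
    have hfull := ((hasDerivAt_id θ).div_const 3).sub (harc.div_const 3)
    have hxsq : 1 - (Real.sqrt 3 * s / 2) ^ 2 = (1 + 3 * c ^ 2) / 4 := by
      rw [div_pow, mul_pow, h3]
      linear_combination (-(3:ℝ)/4) * hsc
    have hsq : Real.sqrt (1 - (Real.sqrt 3 * s / 2) ^ 2) =
        Real.sqrt (1 + 3 * c ^ 2) / 2 := by
      rw [hxsq, Real.sqrt_div (by positivity) 4, hs4]
    have hupos : 0 < Real.sqrt (1 + 3 * c ^ 2) := Real.sqrt_pos.2 (by positivity)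
    convert hfull using 1
    · rfl
    · rfl
    · rfl
    rw [hsq]
    have hid : (1:ℝ) = 1 := rfl
    field_simp
  rw [intervalIntegral.integral_eq_sub_of_hasDerivAt hderiv
    (Continuous.intervalIntegrable ?cont _ _)]
  case cont =>
    apply Continuous.div_const
    apply Continuous.sub continuous_const
    apply Continuous.div (by fun_prop) (Real.continuous_sqrt.comp (by fun_prop))
    intro θ
    exact ne_of_gt (Real.sqrt_pos.2 (by positivity))
  have hsin_t : Real.sin tstar = Real.sqrt 2 / Real.sqrt 3 := by
    rw [tstar, Real.sin_arctan, h2]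
    norm_num
  have harg : Real.sqrt 3 * Real.sin tstar / 2 = Real.sqrt 2 / 2 := by
    rw [hsin_t]
    field_simp
  have harcsin : Real.arcsin (Real.sqrt 2 / 2) = π / 4 := by
    rw [show Real.sqrt 2 / 2 = Real.sin (π / 4) from (Real.sin_pi_div_four).symm,
      Real.arcsin_sin (by linarith [Real.pi_pos]) (by linarith [Real.pi_pos])]
  rw [harg, harcsin, Real.sin_zero]
  norm_num [Real.arcsin_zero]
  ring

lemma integrableOn_polar : IntegrableOn
    (fun p : ℝ × ℝ => p.1 • Fb (polarCoord.symm p))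
    (Ioi (0:ℝ) ×ˢ Ioo (-π) π) := by
  have hmeas : Measurable (fun p : ℝ × ℝ => p.1 • Fb (polarCoord.symm p)) := by
    apply Measurable.smul measurable_fst
    apply Fb_meas.comp
    show Measurable fun p : ℝ × ℝ => (p.1 * Real.cos p.2, p.1 * Real.sin p.2)
    fun_prop
  refine Integrable.mono'
    (g := Set.indicator (Icc (0:ℝ) 1 ×ˢ Icc (-π) π) (fun _ => (1:ℝ)))
    ?_ hmeas.aestronglyMeasurable.restrict ?_
  · refine Integrable.integrableOn ?_
    rw [integrable_indicator_iff (measurableSet_Icc.prod measurableSet_Icc)]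
    refine (integrableOn_const_iff (C := (1:ℝ))).2 (Or.inr ?_)
    rw [Measure.volume_eq_prod, Measure.prod_prod, Real.volume_Icc, Real.volume_Icc]
    exact ENNReal.mul_lt_top ENNReal.ofReal_lt_top ENNReal.ofReal_lt_top
  · refine (ae_restrict_iff' (measurableSet_Ioi.prod measurableSet_Ioo)).2
      (ae_of_all _ fun p hp => ?_)
    obtain ⟨hρ, hθ⟩ := hp
    rw [mem_Ioi] at hρ
    have hval : Fb (polarCoord.symm p) = Fb (p.1 * Real.cos p.2, p.1 * Real.sin p.2) := rfl
    rw [Real.norm_eq_abs, smul_eq_mul, hval,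
      abs_of_nonneg (mul_nonneg hρ.le (Fb_nonneg _))]
    rcases eq_or_ne (Fb (p.1 * Real.cos p.2, p.1 * Real.sin p.2)) 0 with h0 | hne
    · rw [h0, mul_zero]
      exact Set.indicator_nonneg (fun _ _ => by norm_num) p
    · obtain ⟨hlt, _⟩ := Fb_support hne
      have hρ2 : p.1 ^ 2 < 1 := by
        have hsc := Real.sin_sq_add_cos_sq p.2
        have hlt' : (p.1 * Real.cos p.2) ^ 2 + (p.1 * Real.sin p.2) ^ 2 < 1 := hlt
        have heq : p.1 ^ 2 = (p.1 * Real.cos p.2) ^ 2 + (p.1 * Real.sin p.2) ^ 2 := by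
          linear_combination (-(p.1 ^ 2)) * hsc
        linarith
      have hρ1 : p.1 ≤ 1 := by nlinarith
      have hpmem : p ∈ Icc (0:ℝ) 1 ×ˢ Icc (-π) π :=
        ⟨⟨hρ.le, hρ1⟩, ⟨hθ.1.le, hθ.2.le⟩⟩
      rw [Set.indicator_of_mem hpmem]
      exact mul_le_one₀ hρ1 (Fb_nonneg _) (Fb_le_one _)

lemma integral_Fb : (∫ q : ℝ × ℝ, Fb q) = (tstar - π / 4) / 3 := by
  rw [← integral_comp_polarCoord_symm Fb]
  rw [show polarCoord.target = Ioi (0:ℝ) ×ˢ Ioo (-π) π from rfl]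
  rw [Measure.volume_eq_prod, setIntegral_prod _ (by
    rw [← Measure.volume_eq_prod]; exact integrableOn_polar)]
  rw [MeasureTheory.integral_integral_swap (by
    rw [Measure.prod_restrict]
    exact integrableOn_polar)]
  have hcongr : ∀ θ ∈ Ioo (-π) π,
      (∫ ρ in Ioi (0:ℝ), ρ • Fb (polarCoord.symm (ρ, θ))) =
      Set.indicator (Icc 0 tstar)
        (fun θ => (1 - Real.sqrt 3 * Real.cos θ / Real.sqrt (1 + 3 * Real.cos θ ^ 2)) / 3) θ := by
    intro θ hθ
    have hval : ∀ ρ : ℝ, ρ • Fb (polarCoord.symm (ρ, θ)) =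
        ρ * Fb (ρ * Real.cos θ, ρ * Real.sin θ) := fun ρ => rfl
    simp_rw [hval]
    by_cases hmem : θ ∈ Icc 0 tstar
    · rw [Set.indicator_of_mem hmem, inner_eval hmem]
    · rw [Set.indicator_of_notMem hmem, inner_zero hθ hmem]
  rw [setIntegral_congr_fun measurableSet_Ioo hcongr,
    setIntegral_indicator measurableSet_Icc,
    Set.inter_eq_self_of_subset_right (show Icc (0:ℝ) tstar ⊆ Ioo (-π) π from
      fun x hx => ⟨by linarith [hx.1, Real.pi_pos],
        by linarith [hx.2, tstar_lt, Real.pi_pos]⟩),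
    MeasureTheory.integral_Icc_eq_integral_Ioc,
    ← intervalIntegral.integral_of_le tstar_pos.le, outer_eval]

def ψ : E3 ≃ᵐ ℝ × (ℝ × ℝ) :=
  (MeasurableEquiv.toLp 2 (Fin 3 → ℝ)).symm.trans <|
    (MeasurableEquiv.piFinSuccAbove (fun _ : Fin 3 => ℝ) 0).trans <|
      (MeasurableEquiv.refl ℝ).prodCongr (MeasurableEquiv.finTwoArrow)

lemma ψmp : MeasurePreserving ψ volume volume :=
  (EuclideanSpace.volume_preserving_symm_measurableEquiv_toLp (Fin 3)).trans <|
    ((volume_preserving_piFinSuccAbove (fun _ : Fin 3 => ℝ) 0).trans <|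
      (MeasurePreserving.id volume).prod (volume_preserving_finTwoArrow ℝ))

lemma ψ_apply (p : E3) : ψ p = (p 0, (p 1, p 2)) := rfl

lemma vol_SB : volume SB = ENNReal.ofReal ((tstar - π / 4) / 3) := by
  rw [vol_SB_eq, integral_Fb]

lemma tstar_ge : π / 4 ≤ tstar := by
  rw [tstar, ← Real.arctan_one]
  apply Real.arctan_strictMono.monotone
  nlinarith [Real.sq_sqrt (show (0:ℝ) ≤ 2 by norm_num), Real.sqrt_nonneg 2]

lemma ballE3_eq : (Metric.closedBall (0:E3) 1) =
    {p : E3 | p 0 ^ 2 + p 1 ^ 2 + p 2 ^ 2 ≤ 1} := by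
  ext p
  rw [Metric.mem_closedBall, dist_zero_right, mem_setOf_eq]
  rw [EuclideanSpace.norm_eq]
  have hsum : ∑ i, ‖p i‖ ^ 2 = p 0 ^ 2 + p 1 ^ 2 + p 2 ^ 2 := by
    rw [Fin.sum_univ_three]
    simp [Real.norm_eq_abs, sq_abs]
  rw [hsum]
  constructor
  · intro h
    have h0 : (0:ℝ) ≤ p 0 ^ 2 + p 1 ^ 2 + p 2 ^ 2 := by positivity
    calc p 0 ^ 2 + p 1 ^ 2 + p 2 ^ 2
        = Real.sqrt (p 0 ^ 2 + p 1 ^ 2 + p 2 ^ 2) ^ 2 := (Real.sq_sqrt h0).symm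
      _ ≤ 1 := pow_le_one₀ (Real.sqrt_nonneg _) h
  · intro h
    have := Real.sqrt_le_sqrt h
    rwa [Real.sqrt_one] at this

lemma rogers_inter_ball_eq :
    RogersSimplex 1 (2 / Real.sqrt 3) (Real.sqrt 2) ∩ Metric.closedBall 0 1 = ψ ⁻¹' SB := by
  rw [rogers_eq, ballE3_eq]
  ext p
  simp only [mem_inter_iff, SRo, mem_setOf_eq, mem_preimage, ψ_apply, SB]
  constructor
  · rintro ⟨⟨h1, h2, h3, h4⟩, h5⟩
    exact ⟨h1, h3, h4, h5⟩
  · rintro ⟨h1, h3, h4, h5⟩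
    refine ⟨⟨h1, ?_, h3, h4⟩, h5⟩
    nlinarith [sq_nonneg (p 1), sq_nonneg (p 2), sq_nonneg (p 0)]

lemma rogers_preimage : RogersSimplex 1 (2 / Real.sqrt 3) (Real.sqrt 2) = ψ ⁻¹' SR := by
  rw [rogers_eq]
  ext p
  simp only [SRo, mem_setOf_eq, mem_preimage, ψ_apply, SR]

/-- The Rogers simplex `R(1, 2/√3, √2)` has density exactly `δ_oct`. -/
theorem rogers_simplex_density_eq :
    (volume (RogersSimplex 1 (2 / Real.sqrt 3) (Real.sqrt 2) ∩
        Metric.closedBall 0 1)).toReal =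
      δoct * (volume (RogersSimplex 1 (2 / Real.sqrt 3) (Real.sqrt 2))).toReal := by
  have hs4 : Real.sqrt 4 = 2 := by
    rw [show (4:ℝ) = 2 ^ 2 by norm_num, Real.sqrt_sq (by norm_num : (0:ℝ) ≤ 2)]
  have h2 : (Real.sqrt 2 : ℝ) ^ 2 = 2 := Real.sq_sqrt (by norm_num)
  have s2pos : (0:ℝ) < Real.sqrt 2 := Real.sqrt_pos.2 (by norm_num)
  rw [rogers_inter_ball_eq, rogers_preimage,
    ψmp.measure_preimage_equiv, ψmp.measure_preimage_equiv, vol_SB, vol_SR,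
    ENNReal.toReal_ofReal (by linarith [tstar_ge] : (0:ℝ) ≤ (tstar - π / 4) / 3),
    ENNReal.toReal_ofReal (by positivity : (0:ℝ) ≤ Real.sqrt 2 / 18)]
  have hA : Real.arccos (1 / Real.sqrt 3) = tstar := by
    have hcos : Real.cos tstar = 1 / Real.sqrt 3 := by
      rw [tstar, Real.cos_arctan, h2]
      norm_num
    rw [← hcos, Real.arccos_cos tstar_pos.le
      (le_of_lt (lt_trans tstar_lt (by linarith [Real.pi_pos])))]
  have h8 : Real.sqrt 8 = 2 * Real.sqrt 2 := by
    rw [show (8:ℝ) = 4 * 2 by norm_num, Real.sqrt_mul (by norm_num : (0:ℝ) ≤ 4), hs4]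
  rw [δoct, hA, h8]
  field_simp
  ring
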